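/- arXiv:1803.02125 — 4 statements merged into one kernel-verified Lean document; each statement's English description precedes it below -/
import Mathlib

section
/- Let $f:X\to X$ be a measurable map with invariant probability measure $\mu_X$, let $Y\subset X$ with $F=f^\tau:Y\to Y$ an induced map with integrable return time $\tau:Y\to\mathbb{Z}^+$ preserving a probability measure $\mu_Y$, and let $h:X\to\mathbb{R}^+$ be measurable. Define the induced roof function $H(y)=\sum_{\ell=0}^{\tau(y)-1}h(f^\ell y)$. Then for all integers $n\ge1$ and all $t>1$, $\mu_Y(H>t)\le \mu_Y(\tau>n)+\bar\tau\,\mu_X(h>t/n)$, where $\bar\tau=\int_Y\tau\,d\mu_Y$ and $\mu_X$ is the measure obtained from $\mu_Y$ by the tower construction (so $\mu_X=\pi_*\mu^\tau$ with $\mu^\tau=(\mu_Y\times\mathrm{counting})/\bar\tau$ on the tower $Y^\tau$ and $\pi(y,\ell)=f^\ell y$). -/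
open MeasureTheory Filter
open scoped ENNReal

/-- Proposition A.1: tail estimate for the induced roof function
`H(y) = ∑_{ℓ<τ(y)} h(f^ℓ y)`, where `μX` is the tower measure obtained from `μY`. -/
theorem stmt0 {X : Type*} [MeasurableSpace X]
    (f : X → X) (hf : Measurable f)
    (μY : Measure X) [IsProbabilityMeasure μY]
    (τ : X → ℕ) (hτmeas : Measurable τ) (hτpos : ∀ y, 1 ≤ τ y)
    (hτint : ∫⁻ y, (τ y : ℝ≥0∞) ∂μY < ⊤)
    (h : X → ℝ) (hh : Measurable h) (hhpos : ∀ x, 0 < h x)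
    (H : X → ℝ) (hH : ∀ y, H y = ∑ ℓ ∈ Finset.range (τ y), h (f^[ℓ] y))
    (μX : Measure X)
    (hμX : ∀ s : Set X, MeasurableSet s →
      μX s = (∫⁻ y, (τ y : ℝ≥0∞) ∂μY)⁻¹ *
        ∫⁻ y, ∑ ℓ ∈ Finset.range (τ y),
          s.indicator (fun _ => (1 : ℝ≥0∞)) (f^[ℓ] y) ∂μY)
    (n : ℕ) (hn : 1 ≤ n) (t : ℝ) (ht : 1 < t) :
    μY {y | t < H y} ≤ μY {y | n < τ y} +
      (∫⁻ y, (τ y : ℝ≥0∞) ∂μY) * μX {x | t / n < h x} := by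
  have hn0 : (0:ℝ) < n := by exact_mod_cast hn
  have htn : 0 < t / n := div_pos (lt_trans one_pos ht) hn0
  set S : Set X := {x | t / n < h x} with hSdef
  have hSmeas : MeasurableSet S := measurableSet_lt measurable_const hh
  set A : Set X := ⋃ ℓ : ℕ, ({y | ℓ < τ y} ∩ {y | t / n < h (f^[ℓ] y)}) with hAdef
  have hAmeas : MeasurableSet A := MeasurableSet.iUnion fun ℓ =>
    (measurableSet_lt measurable_const hτmeas).inter
      (measurableSet_lt measurable_const (hh.comp (hf.iterate ℓ)))
  have hsub : {y | t < H y} ⊆ {y | n < τ y} ∪ A := by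
    intro y hy
    by_contra hc
    have h1 : τ y ≤ n := not_lt.mp fun hx => hc (Or.inl hx)
    have h2 : y ∉ A := fun hx => hc (Or.inr hx)
    have hall : ∀ ℓ < τ y, h (f^[ℓ] y) ≤ t / n := by
      intro ℓ hℓ
      by_contra hcon
      push_neg at hcon
      exact h2 (Set.mem_iUnion.mpr ⟨ℓ, ⟨hℓ, hcon⟩⟩)
    have hle : H y ≤ t := by
      rw [hH]
      calc ∑ ℓ ∈ Finset.range (τ y), h (f^[ℓ] y)
          ≤ ∑ _ℓ ∈ Finset.range (τ y), (t / n) :=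
            Finset.sum_le_sum fun ℓ hℓ => hall ℓ (Finset.mem_range.mp hℓ)
        _ = (τ y : ℝ) * (t / n) := by
            rw [Finset.sum_const, Finset.card_range, nsmul_eq_mul]
        _ ≤ (n : ℝ) * (t / n) := by
            apply mul_le_mul_of_nonneg_right _ (le_of_lt htn)
            exact_mod_cast h1
        _ = t := by field_simp
    exact absurd hy (by simpa using not_lt.mpr hle)
  have hpoint : ∀ y, A.indicator (fun _ => (1:ℝ≥0∞)) y ≤
      ∑ ℓ ∈ Finset.range (τ y), S.indicator (fun _ => (1:ℝ≥0∞)) (f^[ℓ] y) := by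
    intro y
    by_cases hy : y ∈ A
    · rw [Set.indicator_of_mem hy]
      obtain ⟨ℓ, hmem⟩ := Set.mem_iUnion.mp hy
      have hmS : f^[ℓ] y ∈ S := hmem.2
      have h1 : S.indicator (fun _ => (1:ℝ≥0∞)) (f^[ℓ] y) = 1 :=
        Set.indicator_of_mem hmS _
      calc (1:ℝ≥0∞) = S.indicator (fun _ => (1:ℝ≥0∞)) (f^[ℓ] y) := h1.symm
        _ ≤ _ := Finset.single_le_sum
              (f := fun k => S.indicator (fun _ => (1:ℝ≥0∞)) (f^[k] y))
              (fun i _ => zero_le) (Finset.mem_range.mpr hmem.1)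
    · rw [Set.indicator_of_notMem hy]; exact zero_le
  have hA_le : μY A ≤ ∫⁻ y, ∑ ℓ ∈ Finset.range (τ y),
      S.indicator (fun _ => (1:ℝ≥0∞)) (f^[ℓ] y) ∂μY := by
    rw [← lintegral_indicator_one hAmeas]
    exact lintegral_mono hpoint
  have hT1 : (1:ℝ≥0∞) ≤ ∫⁻ y, (τ y : ℝ≥0∞) ∂μY := by
    calc (1:ℝ≥0∞) = ∫⁻ _, 1 ∂μY := by simp
      _ ≤ _ := lintegral_mono fun y => by show (1:ℝ≥0∞) ≤ (τ y : ℝ≥0∞); exact_mod_cast hτpos y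
  have hT0 : (∫⁻ y, (τ y : ℝ≥0∞) ∂μY) ≠ 0 := by
    intro hc; rw [hc] at hT1; exact (not_le.mpr zero_lt_one) hT1
  have hTtop : (∫⁻ y, (τ y : ℝ≥0∞) ∂μY) ≠ ⊤ := hτint.ne
  have hrw : (∫⁻ y, (τ y : ℝ≥0∞) ∂μY) * μX S =
      ∫⁻ y, ∑ ℓ ∈ Finset.range (τ y),
        S.indicator (fun _ => (1:ℝ≥0∞)) (f^[ℓ] y) ∂μY := by
    rw [hμX S hSmeas, ← mul_assoc, ENNReal.mul_inv_cancel hT0 hTtop, one_mul]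
  calc μY {y | t < H y} ≤ μY ({y | n < τ y} ∪ A) := measure_mono hsub
    _ ≤ μY {y | n < τ y} + μY A := measure_union_le _ _
    _ ≤ μY {y | n < τ y} + (∫⁻ y, (τ y : ℝ≥0∞) ∂μY) * μX S := by
        rw [hrw]; exact add_le_add_right hA_le _
end

section
/- Under the hypotheses of the induced roof function tail estimate, if $\mu_X(h>t)=O(e^{-ct})$ and $\mu_Y(\tau>n)=O(e^{-dn})$ for some $c,d>0$, then $\mu_Y(H>t)=O(e^{-(cdt)^{1/2}})$. -/
open MeasureTheory Filter
open scoped ENNReal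

set_option maxHeartbeats 2000000 in
/-- Remark A.2(b): if `μX(h>t) = O(e^{-ct})` and `μY(τ>n) = O(e^{-dn})`, then the
induced roof function satisfies `μY(H>t) = O(e^{-(cdt)^{1/2}})`, given the key
tail inequality `μY(H>t) ≤ μY(τ>n) + τ̄ μX(h>t/n)` for all `n ≥ 1`, `t > 1`. -/
theorem stmt1 {Y X : Type*} [MeasurableSpace Y] [MeasurableSpace X]
    (μY : Measure Y) [IsProbabilityMeasure μY]
    (μX : Measure X) [IsProbabilityMeasure μX]
    (H : Y → ℝ) (τ : Y → ℕ) (h : X → ℝ)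
    (τbar : ℝ≥0∞) (hτbar : τbar ≠ ⊤)
    (key : ∀ n : ℕ, 1 ≤ n → ∀ t : ℝ, 1 < t →
      μY {y | t < H y} ≤ μY {y | n < τ y} + τbar * μX {x | t / n < h x})
    (c d : ℝ) (hc : 0 < c) (hd : 0 < d)
    (C₁ C₂ : ℝ)
    (hX : ∀ t : ℝ, 1 ≤ t → μX {x | t < h x} ≤ ENNReal.ofReal (C₁ * Real.exp (-c * t)))
    (hY : ∀ n : ℕ, 1 ≤ n → μY {y | n < τ y} ≤ ENNReal.ofReal (C₂ * Real.exp (-d * n))) :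
    ∃ C : ℝ, ∀ t : ℝ, 1 ≤ t →
      μY {y | t < H y} ≤ ENNReal.ofReal (C * Real.exp (-Real.sqrt (c * d * t))) := by
  set a := Real.sqrt (c / d) with ha
  have ha0 : 0 ≤ a := Real.sqrt_nonneg _
  set T : ℝ := max 2 ((a + 1) ^ 2) with hT
  have hT2 : (2 : ℝ) ≤ T := le_max_left _ _
  set M : ℝ := |C₂| + τbar.toReal * |C₁| * Real.exp d with hM
  refine ⟨max (Real.exp (Real.sqrt (c * d * T))) M, fun t ht => ?_⟩
  set E : ℝ := Real.exp (-Real.sqrt (c * d * t)) with hE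
  have hE0 : 0 < E := Real.exp_pos _
  by_cases hcase : t ≤ T
  · -- small t: use μY ≤ 1
    have h1 : (1 : ℝ) ≤ Real.exp (Real.sqrt (c * d * T)) * E := by
      rw [hE, ← Real.exp_add]
      have : 0 ≤ Real.sqrt (c * d * T) - Real.sqrt (c * d * t) := by
        have := Real.sqrt_le_sqrt (show c * d * t ≤ c * d * T by
          have : 0 < c * d := mul_pos hc hd
          nlinarith)
        linarith
      calc (1 : ℝ) = Real.exp 0 := Real.exp_zero.symm
        _ ≤ _ := Real.exp_le_exp.mpr (by linarith)
    calc μY {y | t < H y} ≤ 1 := prob_le_one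
      _ = ENNReal.ofReal 1 := by simp
      _ ≤ ENNReal.ofReal (max (Real.exp (Real.sqrt (c * d * T))) M * E) := by
          apply ENNReal.ofReal_le_ofReal
          calc (1:ℝ) ≤ Real.exp (Real.sqrt (c * d * T)) * E := h1
            _ ≤ _ := by
                apply mul_le_mul_of_nonneg_right (le_max_left _ _) hE0.le
  · push_neg at hcase
    have ht1 : (1 : ℝ) < t := by linarith
    have ht0 : (0 : ℝ) < t := by linarith
    set s : ℝ := Real.sqrt (c * t / d) with hs
    have hsq : s ^ 2 = c * t / d := Real.sq_sqrt (by positivity)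
    have hs0 : 0 < s := Real.sqrt_pos.mpr (by positivity)
    have hct : c * t = d * s ^ 2 := by rw [hsq]; field_simp
    set n : ℕ := ⌈s⌉₊ with hn
    have hn1 : 1 ≤ n := Nat.one_le_iff_ne_zero.mpr (by
      simp [hn, Nat.ceil_eq_zero, not_le, hs0])
    have hns : s ≤ (n : ℝ) := Nat.le_ceil s
    have hns2 : (n : ℝ) ≤ s + 1 := (Nat.ceil_lt_add_one hs0.le).le
    have hn0 : (0 : ℝ) < (n : ℝ) := by exact_mod_cast hn1
    clear_value s n
    -- identity √(cdt) = d s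
    have hid : Real.sqrt (c * d * t) = d * s := by
      rw [show c * d * t = (d * s) ^ 2 by nlinarith, Real.sqrt_sq (by positivity)]
    -- n ≤ t
    have hu : a + 1 ≤ Real.sqrt t := by
      have h1 : (a + 1) ^ 2 ≤ t := le_trans (le_max_right 2 _) hcase.le
      calc a + 1 = Real.sqrt ((a + 1) ^ 2) := (Real.sqrt_sq (by positivity)).symm
        _ ≤ Real.sqrt t := Real.sqrt_le_sqrt h1
    have hsau : s = a * Real.sqrt t := by
      rw [hs, ha, show c * t / d = (c / d) * t by ring,
        Real.sqrt_mul (by positivity)]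
    have hnt : (n : ℝ) ≤ t := by
      have hut : (Real.sqrt t) ^ 2 = t := Real.sq_sqrt ht0.le
      nlinarith [hns2, hu, ha0, Real.sqrt_nonneg t]
    have htn1 : (1 : ℝ) ≤ t / n := (one_le_div hn0).mpr hnt
    -- real estimates
    have e1 : C₂ * Real.exp (-d * n) ≤ |C₂| * E := by
      have hmono : Real.exp (-d * n) ≤ E := by
        rw [hE]
        apply Real.exp_le_exp.mpr
        rw [hid]
        nlinarith
      calc C₂ * Real.exp (-d * n) ≤ |C₂| * Real.exp (-d * n) :=
            mul_le_mul_of_nonneg_right (le_abs_self _) (Real.exp_pos _).le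
        _ ≤ |C₂| * E := mul_le_mul_of_nonneg_left hmono (abs_nonneg _)
    have e2 : C₁ * Real.exp (-c * (t / n)) ≤ |C₁| * (Real.exp d * E) := by
      have harg : -c * (t / n) ≤ d - Real.sqrt (c * d * t) := by
        rw [hid]
        have key2 : (d * s - d) * n ≤ c * t := by
          rcases le_or_gt (d * s - d) 0 with hneg | hpos
          · nlinarith [mul_nonneg (neg_nonneg.mpr hneg) hn0.le, mul_pos hd (mul_pos hs0 hs0)]
          · nlinarith [mul_le_mul_of_nonneg_left hns2 hpos.le]
        have : d * s - d ≤ c * (t / n) := by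
          rw [mul_div_assoc' c t n, le_div_iff₀ hn0]
          exact key2
        linarith
      have hmono : Real.exp (-c * (t / n)) ≤ Real.exp d * E := by
        rw [hE, ← Real.exp_add]
        exact Real.exp_le_exp.mpr (by linarith)
      calc C₁ * Real.exp (-c * (t / n)) ≤ |C₁| * Real.exp (-c * (t / n)) :=
            mul_le_mul_of_nonneg_right (le_abs_self _) (Real.exp_pos _).le
        _ ≤ |C₁| * (Real.exp d * E) := mul_le_mul_of_nonneg_left hmono (abs_nonneg _)
    -- assemble in ℝ≥0∞
    have hτb : τbar = ENNReal.ofReal τbar.toReal := (ENNReal.ofReal_toReal hτbar).symm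
    calc μY {y | t < H y}
        ≤ μY {y | n < τ y} + τbar * μX {x | t / n < h x} := key n hn1 t ht1
      _ ≤ ENNReal.ofReal (C₂ * Real.exp (-d * n)) +
          τbar * ENNReal.ofReal (C₁ * Real.exp (-c * (t / n))) :=
            add_le_add (hY n hn1) (mul_le_mul_right (hX (t / n) htn1) τbar)
      _ = ENNReal.ofReal (C₂ * Real.exp (-d * n)) +
          ENNReal.ofReal (τbar.toReal * (C₁ * Real.exp (-c * (t / n)))) := by
            rw [ENNReal.ofReal_mul ENNReal.toReal_nonneg, ENNReal.ofReal_toReal hτbar]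
      _ ≤ ENNReal.ofReal (|C₂| * E) +
          ENNReal.ofReal (τbar.toReal * (|C₁| * (Real.exp d * E))) := by
            refine add_le_add (ENNReal.ofReal_le_ofReal e1) (ENNReal.ofReal_le_ofReal ?_)
            exact mul_le_mul_of_nonneg_left e2 ENNReal.toReal_nonneg
      _ = ENNReal.ofReal (M * E) := by
            rw [← ENNReal.ofReal_add (by positivity) (by positivity)]
            congr 1
            rw [hM]; ring
      _ ≤ ENNReal.ofReal (max (Real.exp (Real.sqrt (c * d * T))) M * E) := by
            apply ENNReal.ofReal_le_ofReal
            exact mul_le_mul_of_nonneg_right (le_max_right _ _) hE0.le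
end

section
/- Under the hypotheses of the induced roof function tail estimate, if $\mu_X(h>t)=O(t^{-\beta_1})$ and $\mu_Y(\tau>n)=O(n^{-\beta_2})$ for some $\beta_1,\beta_2>0$, then $\mu_Y(H>t)=O(t^{-\beta})$ where $\beta=\beta_1\beta_2/(\beta_1+\beta_2)$. -/
open MeasureTheory Filter
open scoped ENNReal

/-- Remark A.2(d): if `μX(h>t) = O(t^{-β₁})` and `μY(τ>n) = O(n^{-β₂})`, then the
induced roof function satisfies `μY(H>t) = O(t^{-β})` with `β = β₁β₂/(β₁+β₂)`,
given the key tail inequality `μY(H>t) ≤ μY(τ>n) + τ̄ μX(h>t/n)` for `n ≥ 1`, `t > 1`. -/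
theorem stmt2 {Y X : Type*} [MeasurableSpace Y] [MeasurableSpace X]
    (μY : Measure Y) [IsProbabilityMeasure μY]
    (μX : Measure X) [IsProbabilityMeasure μX]
    (H : Y → ℝ) (τ : Y → ℕ) (h : X → ℝ)
    (τbar : ℝ≥0∞) (hτbar : τbar ≠ ⊤)
    (key : ∀ n : ℕ, 1 ≤ n → ∀ t : ℝ, 1 < t →
      μY {y | t < H y} ≤ μY {y | n < τ y} + τbar * μX {x | t / n < h x})
    (β₁ β₂ : ℝ) (hβ₁ : 0 < β₁) (hβ₂ : 0 < β₂)
    (C₁ C₂ : ℝ)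
    (hX : ∀ t : ℝ, 1 ≤ t → μX {x | t < h x} ≤ ENNReal.ofReal (C₁ * t ^ (-β₁)))
    (hY : ∀ n : ℕ, 1 ≤ n → μY {y | n < τ y} ≤ ENNReal.ofReal (C₂ * (n : ℝ) ^ (-β₂))) :
    ∃ C : ℝ, ∀ t : ℝ, 1 ≤ t →
      μY {y | t < H y} ≤ ENNReal.ofReal (C * t ^ (-(β₁ * β₂ / (β₁ + β₂)))) := by
  have hs : (0:ℝ) < β₁ + β₂ := by linarith
  set β : ℝ := β₁ * β₂ / (β₁ + β₂) with hβdef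
  set γ : ℝ := β₁ / (β₁ + β₂) with hγdef
  have hγ0 : 0 < γ := div_pos hβ₁ hs
  have hγ1 : γ < 1 := by rw [hγdef, div_lt_one hs]; linarith
  have hβ0 : 0 < β := div_pos (mul_pos hβ₁ hβ₂) hs
  have hγβ₂ : γ * β₂ = β := by rw [hγdef, hβdef]; field_simp
  have h1γβ₁ : (1 - γ) * β₁ = β := by
    rw [hγdef, hβdef]; field_simp; ring
  set T₀ : ℝ := 2 ^ (1/(1-γ)) with hT₀def
  have h1γ : (0:ℝ) < 1 - γ := by linarith
  have hT₀1 : 1 < T₀ := by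
    rw [hT₀def, Real.one_lt_rpow_iff_of_pos (by norm_num)]
    left
    exact ⟨by norm_num, by positivity⟩
  refine ⟨max (T₀ ^ β) (max C₂ 0 + τbar.toReal * (max C₁ 0 * 2 ^ β₁)), fun t ht1 => ?_⟩
  have ht0 : (0:ℝ) < t := lt_of_lt_of_le one_pos ht1
  have htβ : (0:ℝ) ≤ t ^ (-β) := Real.rpow_nonneg ht0.le _
  rcases lt_or_ge t T₀ with htT | htT
  · -- small t : use probability bound
    calc μY {y | t < H y} ≤ 1 := prob_le_one
    _ ≤ ENNReal.ofReal (max (T₀ ^ β) (max C₂ 0 + τbar.toReal * (max C₁ 0 * 2 ^ β₁)) * t ^ (-β)) := by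
        rw [ENNReal.one_le_ofReal]
        have h1 : (1:ℝ) = t ^ β * t ^ (-β) := by
          rw [← Real.rpow_add ht0]; simp
        rw [h1]
        refine mul_le_mul_of_nonneg_right ?_ htβ
        exact le_trans (Real.rpow_le_rpow ht0.le htT.le hβ0.le) (le_max_left _ _)
  · -- large t
    have ht1' : 1 < t := lt_of_lt_of_le hT₀1 htT
    have ha1 : (1:ℝ) ≤ t ^ γ := Real.one_le_rpow ht1'.le hγ0.le
    have ha0 : (0:ℝ) < t ^ γ := lt_of_lt_of_le one_pos ha1
    set n : ℕ := ⌈t ^ γ⌉₊ with hndef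
    have hn1 : 1 ≤ n := Nat.one_le_iff_ne_zero.mpr (by
      simp [hndef, Nat.ceil_eq_zero, not_le, ha0])
    have hna : t ^ γ ≤ (n:ℝ) := Nat.le_ceil _
    have hn0 : (0:ℝ) < n := lt_of_lt_of_le ha0 hna
    have hn2a : (n:ℝ) ≤ 2 * t ^ γ := by
      have := (Nat.ceil_lt_add_one ha0.le).le
      linarith
    -- t^(1-γ) ≥ 2
    have ht2 : (2:ℝ) ≤ t ^ (1-γ) := by
      have : T₀ ^ (1-γ) ≤ t ^ (1-γ) :=
        Real.rpow_le_rpow (by positivity) htT h1γ.le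
      calc (2:ℝ) = T₀ ^ (1-γ) := by
            rw [hT₀def, ← Real.rpow_mul (by norm_num), one_div,
              inv_mul_cancel₀ (ne_of_gt h1γ), Real.rpow_one]
      _ ≤ t ^ (1-γ) := this
    have htn1 : (1:ℝ) ≤ t / n := by
      have h1 : t / (2 * t ^ γ) ≤ t / n :=
        div_le_div_of_nonneg_left ht0.le hn0 hn2a
      have h2 : t ^ (1-γ) / 2 = t / (2 * t ^ γ) := by
        rw [Real.rpow_sub ht0, Real.rpow_one]; ring
      linarith [h1, h2 ▸ (by linarith : (1:ℝ) ≤ t ^ (1-γ) / 2)]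
    have htn0 : (0:ℝ) < t / n := lt_of_lt_of_le one_pos htn1
    -- first term bound
    have hterm1 : C₂ * (n:ℝ) ^ (-β₂) ≤ max C₂ 0 * t ^ (-β) := by
      have hb : (n:ℝ) ^ (-β₂) ≤ t ^ (-β) := by
        have h1 : (n:ℝ) ^ (-β₂) ≤ (t ^ γ) ^ (-β₂) :=
          Real.rpow_le_rpow_of_nonpos ha0 hna (by linarith)
        have h2 : (t ^ γ) ^ (-β₂) = t ^ (-β) := by
          rw [← Real.rpow_mul ht0.le, mul_neg, hγβ₂]
        linarith [h1, h2 ▸ h1]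
      exact mul_le_mul (le_max_left _ _) hb (Real.rpow_nonneg hn0.le _) (le_max_right _ _)
    -- second term bound
    have hterm2 : C₁ * (t/n) ^ (-β₁) ≤ max C₁ 0 * (2 ^ β₁ * t ^ (-β)) := by
      have hb : (t/n) ^ (-β₁) ≤ 2 ^ β₁ * t ^ (-β) := by
        have h1 : (t/n) ^ (-β₁) ≤ (t ^ (1-γ) / 2) ^ (-β₁) := by
          refine Real.rpow_le_rpow_of_nonpos (by linarith) ?_ (by linarith)
          have h2 : t ^ (1-γ) / 2 = t / (2 * t ^ γ) := by
            rw [Real.rpow_sub ht0, Real.rpow_one]; ring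
          rw [h2]
          exact div_le_div_of_nonneg_left ht0.le hn0 hn2a
        have h3 : (t ^ (1-γ) / 2) ^ (-β₁) = 2 ^ β₁ * t ^ (-β) := by
          rw [Real.div_rpow (by positivity) (by norm_num),
            ← Real.rpow_mul ht0.le, Real.rpow_neg (by norm_num : (0:ℝ) ≤ 2),
            div_eq_mul_inv, inv_inv, mul_neg, h1γβ₁, mul_comm]
        linarith [h1, h3 ▸ h1]
      exact mul_le_mul (le_max_left _ _) hb (Real.rpow_nonneg htn0.le _) (le_max_right _ _)
    calc μY {y | t < H y}
        ≤ μY {y | n < τ y} + τbar * μX {x | t / n < h x} := key n hn1 t ht1'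
    _ ≤ ENNReal.ofReal (max C₂ 0 * t ^ (-β)) +
        ENNReal.ofReal (τbar.toReal * (max C₁ 0 * (2 ^ β₁ * t ^ (-β)))) := by
        refine add_le_add ?_ ?_
        · exact le_trans (hY n hn1) (ENNReal.ofReal_le_ofReal hterm1)
        · calc τbar * μX {x | t / n < h x}
              ≤ τbar * ENNReal.ofReal (C₁ * (t/n) ^ (-β₁)) :=
                mul_le_mul_right (hX _ htn1) _
          _ ≤ τbar * ENNReal.ofReal (max C₁ 0 * (2 ^ β₁ * t ^ (-β))) :=
                mul_le_mul_right (ENNReal.ofReal_le_ofReal hterm2) _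
          _ = ENNReal.ofReal (τbar.toReal * (max C₁ 0 * (2 ^ β₁ * t ^ (-β)))) := by
                rw [ENNReal.ofReal_mul ENNReal.toReal_nonneg,
                  ENNReal.ofReal_toReal hτbar]
    _ ≤ ENNReal.ofReal (max (T₀ ^ β) (max C₂ 0 + τbar.toReal * (max C₁ 0 * 2 ^ β₁)) * t ^ (-β)) := by
        rw [← ENNReal.ofReal_add (by positivity) (by positivity)]
        refine ENNReal.ofReal_le_ofReal ?_
        have : max C₂ 0 * t ^ (-β) + τbar.toReal * (max C₁ 0 * (2 ^ β₁ * t ^ (-β)))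
            = (max C₂ 0 + τbar.toReal * (max C₁ 0 * 2 ^ β₁)) * t ^ (-β) := by ring
        rw [this]
        exact mul_le_mul_of_nonneg_right (le_max_right _ _) htβ
end

section
/- In the setting of a suspension semiflow over an ergodic map $F:Y\to Y$ with roof $H\in L^2(Y)$, $\inf H>0$: let $v:M\to\mathbb{R}^d$ be bounded, define $g(y)=\int_0^{H(y)}|v(T_sy)|\,ds$ and $\psi(y,u)=\int_0^u v(T_sy)\,ds$. Then $g\le|v|_\infty H\in L^2(Y)$, and $n^{-1/2}\sup_{t\in[0,T]}|\psi\circ f_{nt}|\to0$ almost everywhere on the suspension $Y^H$ as $n\to\infty$, for each fixed $T>0$. -/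
open MeasureTheory Filter

lemma stmt18_sqrtNat_atTop : Tendsto (fun n : ℕ => Real.sqrt n) atTop atTop := by
  have := (tendsto_rpow_atTop (y := (1/2 : ℝ)) (by norm_num)).comp
    (tendsto_natCast_atTop_atTop (R := ℝ))
  simpa [Function.comp_def, Real.sqrt_eq_rpow] using this

lemma stmt18_inv_sqrt : Tendsto (fun n : ℕ => (Real.sqrt n)⁻¹) atTop (nhds 0) :=
  tendsto_inv_atTop_zero.comp stmt18_sqrtNat_atTop

lemma stmt18_bc {Y : Type*} [MeasurableSpace Y] (μ : Measure Y) [IsProbabilityMeasure μ]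
    (F : Y → Y) (hF : MeasurePreserving F μ μ) (H : Y → ℝ) (hHmeas : Measurable H)
    (hH2 : MemLp H 2 μ) (hpos : ∀ y, 0 ≤ H y) :
    ∀ᵐ y ∂μ, ∀ ε : ℝ, 0 < ε → ∀ᶠ k in atTop, H (F^[k] y) ≤ ε * Real.sqrt k := by
  have hint : Integrable (fun y => H y ^ 2) μ := hH2.integrable_sq
  have key : ∀ m : ℕ, ∀ᵐ y ∂μ, ∀ᶠ k in atTop,
      H (F^[k] y) ≤ ((m : ℝ) + 1)⁻¹ * Real.sqrt k := by
    intro m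
    set c : ℝ := (m : ℝ) + 1 with hc_def
    have hc : 0 < c := by positivity
    letI : MeasureSpace Y := @MeasureSpace.mk Y _ μ
    haveI : IsProbabilityMeasure (volume : Measure Y) := ‹IsProbabilityMeasure μ›
    have hXint : Integrable (fun y => c ^ 2 * H y ^ 2) μ := hint.const_mul _
    have hXnn : 0 ≤ (fun y => c ^ 2 * H y ^ 2) := fun y => by positivity
    have htsum := ProbabilityTheory.tsum_prob_mem_Ioi_lt_top (X := fun y => c ^ 2 * H y ^ 2)
      hXint hXnn
    set s : ℕ → Set Y := fun k => F^[k] ⁻¹' {y | (k : ℝ) < c ^ 2 * H y ^ 2} with hs_def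
    have hmeas : ∀ k : ℕ, MeasurableSet {y | (k : ℝ) < c ^ 2 * H y ^ 2} := fun k =>
      measurableSet_lt measurable_const ((hHmeas.pow_const 2).const_mul _)
    have hμs : ∀ k : ℕ, μ (s k) = μ {y | (k : ℝ) < c ^ 2 * H y ^ 2} := fun k =>
      (hF.iterate k).measure_preimage (hmeas k).nullMeasurableSet
    have hsum : (∑' k, μ (s k)) ≠ ⊤ := by
      have : (∑' k : ℕ, μ (s k)) < ⊤ := by
        calc (∑' k : ℕ, μ (s k)) = ∑' k : ℕ, μ {y | (k : ℝ) < c ^ 2 * H y ^ 2} :=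
              tsum_congr hμs
          _ < ⊤ := by
              have h := htsum
              simp only [Set.mem_Ioi] at h
              exact h
      exact this.ne
    filter_upwards [MeasureTheory.ae_eventually_notMem hsum] with y hy
    filter_upwards [hy] with k hk
    have hk' : c ^ 2 * H (F^[k] y) ^ 2 ≤ (k : ℝ) := by
      by_contra hcon
      exact hk (by simpa [hs_def, Set.mem_preimage] using lt_of_not_ge hcon)
    have hHk : 0 ≤ H (F^[k] y) := hpos _
    have h1 : c * H (F^[k] y) ≤ Real.sqrt k := by
      rw [Real.le_sqrt (by positivity) (by positivity)]
      calc (c * H (F^[k] y)) ^ 2 = c ^ 2 * H (F^[k] y) ^ 2 := by ring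
        _ ≤ (k : ℝ) := hk'
    calc H (F^[k] y) = c⁻¹ * (c * H (F^[k] y)) := by field_simp
      _ ≤ c⁻¹ * Real.sqrt k := mul_le_mul_of_nonneg_left h1 (by positivity)
  filter_upwards [ae_all_iff.2 key] with y hy ε hε
  obtain ⟨m, hm⟩ := exists_nat_gt ε⁻¹
  have hmε : ((m : ℝ) + 1)⁻¹ ≤ ε := by
    rw [inv_le_comm₀ (by positivity) hε]
    linarith
  filter_upwards [hy m] with k hk
  calc H (F^[k] y) ≤ ((m : ℝ) + 1)⁻¹ * Real.sqrt k := hk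
    _ ≤ ε * Real.sqrt k := mul_le_mul_of_nonneg_right hmε (Real.sqrt_nonneg _)

lemma stmt18_sup (a : ℕ → ℝ) (ha0 : ∀ k, 0 ≤ a k)
    (ha : ∀ ε : ℝ, 0 < ε → ∀ᶠ k in atTop, a k ≤ ε * Real.sqrt k)
    (c : ℝ) (hc : 0 ≤ c) (K : ℕ → ℕ) (hK : ∀ n : ℕ, (K n : ℝ) ≤ c * n + 1) :
    Tendsto (fun n : ℕ => (Real.sqrt n)⁻¹ *
      (Finset.range (K n + 1)).sup' ⟨0, Finset.mem_range.2 (Nat.succ_pos _)⟩ a)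
      atTop (nhds 0) := by
  rw [Metric.tendsto_atTop]
  intro ε hε
  have hsq : 0 < Real.sqrt (c + 1) := Real.sqrt_pos.2 (by linarith)
  set δ : ℝ := ε / (2 * Real.sqrt (c + 1)) with hδ_def
  have hδ : 0 < δ := by positivity
  obtain ⟨M, hM⟩ := (ha δ hδ).exists_forall_of_atTop
  set C : ℝ := (Finset.range (M + 1)).sup' ⟨0, Finset.mem_range.2 (Nat.succ_pos _)⟩ a with hC_def
  have hC0 : 0 ≤ C := (ha0 0).trans (Finset.le_sup' a (Finset.mem_range.2 (Nat.succ_pos _)))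
  have hsup : ∀ n : ℕ,
      (Finset.range (K n + 1)).sup' ⟨0, Finset.mem_range.2 (Nat.succ_pos _)⟩ a
        ≤ C + δ * Real.sqrt (c * n + 1) := by
    intro n
    apply Finset.sup'_le
    intro k hk
    have hk' : (k : ℝ) ≤ c * n + 1 := by
      have : k ≤ K n := Nat.lt_succ_iff.1 (Finset.mem_range.1 hk)
      exact le_trans (Nat.cast_le.2 this) (hK n)
    rcases le_or_gt k M with h | h
    · have : a k ≤ C := Finset.le_sup' a (Finset.mem_range.2 (Nat.lt_succ_iff.2 h))
      have hnn : 0 ≤ δ * Real.sqrt (c * n + 1) := by positivity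
      linarith
    · have h1 : a k ≤ δ * Real.sqrt k := hM k h.le
      have h2 : Real.sqrt k ≤ Real.sqrt (c * n + 1) := Real.sqrt_le_sqrt hk'
      have : a k ≤ δ * Real.sqrt (c * n + 1) :=
        h1.trans (mul_le_mul_of_nonneg_left h2 hδ.le)
      linarith
  have h1 : Tendsto (fun n : ℕ => (Real.sqrt n)⁻¹ * C) atTop (nhds 0) := by
    simpa using stmt18_inv_sqrt.mul_const C
  rw [Metric.tendsto_atTop] at h1
  obtain ⟨n₁, hn₁⟩ := h1 (ε / 2) (by positivity)
  refine ⟨max n₁ 1, fun n hn => ?_⟩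
  have hn1 : 1 ≤ n := le_trans (le_max_right _ _) hn
  have hsn : 0 < Real.sqrt n :=
    Real.sqrt_pos.2 (by exact_mod_cast Nat.lt_of_lt_of_le Nat.zero_lt_one hn1)
  have hval0 : 0 ≤ (Real.sqrt n)⁻¹ *
      (Finset.range (K n + 1)).sup' ⟨0, Finset.mem_range.2 (Nat.succ_pos _)⟩ a := by
    apply mul_nonneg (by positivity)
    exact (ha0 0).trans (Finset.le_sup' a (Finset.mem_range.2 (Nat.succ_pos _)))
  rw [Real.dist_eq, sub_zero, abs_of_nonneg hval0]
  have hterm2 : (Real.sqrt n)⁻¹ * (δ * Real.sqrt (c * n + 1)) ≤ ε / 2 := by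
    have hcn : c * n + 1 ≤ (c + 1) * n := by
      have : (1 : ℝ) ≤ (n : ℝ) := by exact_mod_cast hn1
      nlinarith
    have h2 : Real.sqrt (c * n + 1) ≤ Real.sqrt (c + 1) * Real.sqrt n := by
      rw [← Real.sqrt_mul (by linarith)]
      exact Real.sqrt_le_sqrt hcn
    have h3 : (Real.sqrt n)⁻¹ * (δ * Real.sqrt (c * n + 1))
        ≤ (Real.sqrt n)⁻¹ * (δ * (Real.sqrt (c + 1) * Real.sqrt n)) := by
      apply mul_le_mul_of_nonneg_left _ (by positivity)
      exact mul_le_mul_of_nonneg_left h2 hδ.le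
    have h4 : (Real.sqrt n)⁻¹ * (δ * (Real.sqrt (c + 1) * Real.sqrt n)) = ε / 2 := by
      field_simp [hδ_def]
      rw [hδ_def]
      field_simp
    linarith
  have hterm1 : (Real.sqrt n)⁻¹ * C < ε / 2 := by
    have := hn₁ n (le_trans (le_max_left _ _) hn)
    rw [Real.dist_eq, sub_zero] at this
    calc (Real.sqrt n)⁻¹ * C ≤ |(Real.sqrt n)⁻¹ * C| := le_abs_self _
      _ < ε / 2 := this
  calc (Real.sqrt n)⁻¹ * (Finset.range (K n + 1)).sup' ⟨0, Finset.mem_range.2 (Nat.succ_pos _)⟩ a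
      ≤ (Real.sqrt n)⁻¹ * (C + δ * Real.sqrt (c * n + 1)) :=
        mul_le_mul_of_nonneg_left (hsup n) (by positivity)
    _ = (Real.sqrt n)⁻¹ * C + (Real.sqrt n)⁻¹ * (δ * Real.sqrt (c * n + 1)) := by ring
    _ < ε / 2 + ε / 2 := add_lt_add_of_lt_of_le hterm1 hterm2
    _ = ε := by ring


/-- Claim (b) in the proof of Theorem 2.5: with `g(y) = ∫_0^{H(y)} |v(T_s y)| ds` and
`ψ(y,u) = ∫_0^u v(T_s y) ds`, one has `g ≤ |v|_∞ H ∈ L²`, and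
`n^{-1/2} sup_{t∈[0,T]} |ψ∘f_{nt}| → 0` almost everywhere on the suspension, where
`ψ∘f_t(y,u) = ψ(F^{N(t)(y,u)}y, u + t - ∑_{j<N} H(F^j y))` with lap number `N`. -/
theorem stmt18 {M Y : Type*} [MetricSpace M] [MeasurableSpace Y]
    (μ : Measure Y) [IsProbabilityMeasure μ]
    (T : ℝ → M → M) (incl : Y → M) (F : Y → Y) (hF : Ergodic F μ)
    (H : Y → ℝ) (hHmeas : Measurable H) (hH2 : MemLp H 2 μ)
    (h₀ : ℝ) (hh₀ : 0 < h₀) (hinf : ∀ y, h₀ ≤ H y)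
    (hret : ∀ y, T (H y) (incl y) = incl (F y))
    {d : ℕ} (v : M → EuclideanSpace ℝ (Fin d)) (vB : ℝ) (hvB : ∀ x, ‖v x‖ ≤ vB)
    (g : Y → ℝ) (hg : ∀ y, g y = ∫ s in (0:ℝ)..(H y), ‖v (T s (incl y))‖)
    (ψ : Y → ℝ → EuclideanSpace ℝ (Fin d))
    (hψ : ∀ y u, ψ y u = ∫ s in (0:ℝ)..u, v (T s (incl y)))
    (N : ℝ → Y → ℝ → ℕ)
    (hN : ∀ t y u, N t y u = sSup {n : ℕ | u + ∑ j ∈ Finset.range n, H (F^[j] y) ≤ t}) :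
    (∀ y, g y ≤ vB * H y) ∧
    ∀ T' : ℝ, 0 < T' →
      ∀ᵐ y ∂μ, ∀ u ∈ Set.Icc (0:ℝ) (H y),
        Tendsto (fun n : ℕ =>
            (n : ℝ) ^ (-(1/2 : ℝ)) *
              ⨆ t : Set.Icc (0:ℝ) T',
                ‖ψ (F^[N ((n : ℝ) * (t : ℝ)) y u] y)
                    ((u + (n : ℝ) * (t : ℝ)) -
                      ∑ j ∈ Finset.range (N ((n : ℝ) * (t : ℝ)) y u), H (F^[j] y))‖)
          atTop (nhds 0) := by
  constructor
  · intro y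
    have hHy : 0 < H y := hh₀.trans_le (hinf y)
    have h1 : ‖∫ s in (0:ℝ)..(H y), ‖v (T s (incl y))‖‖ ≤ vB * |H y - 0| :=
      intervalIntegral.norm_integral_le_of_norm_le_const fun s _ => by
        simpa using hvB (T s (incl y))
    rw [hg]
    calc (∫ s in (0:ℝ)..(H y), ‖v (T s (incl y))‖)
        ≤ ‖∫ s in (0:ℝ)..(H y), ‖v (T s (incl y))‖‖ := le_abs_self _
      _ ≤ vB * |H y - 0| := h1
      _ = vB * H y := by rw [sub_zero, abs_of_pos hHy]
  · intro T' hT'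
    have hbc := stmt18_bc μ F hF.toMeasurePreserving H hHmeas hH2
      fun y => hh₀.le.trans (hinf y)
    filter_upwards [hbc] with y hy u hu
    obtain ⟨hu0, huH⟩ := hu
    have hvB0 : 0 ≤ vB := (norm_nonneg _).trans (hvB (incl y))
    set a : ℕ → ℝ := fun k => H (F^[k] y) with ha_def
    have ha0 : ∀ k, 0 ≤ a k := fun k => hh₀.le.trans (hinf _)
    set S : ℕ → ℝ := fun m => ∑ j ∈ Finset.range m, H (F^[j] y) with hS_def
    have hS0 : S 0 = 0 := by simp [hS_def]
    have hSsucc : ∀ m, S (m + 1) = S m + a m := fun m => Finset.sum_range_succ _ m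
    have hSlb : ∀ m : ℕ, (m : ℝ) * h₀ ≤ S m := by
      intro m
      calc (m : ℝ) * h₀ = ∑ _j ∈ Finset.range m, h₀ := by simp [mul_comm]
        _ ≤ S m := Finset.sum_le_sum fun j _ => hinf _
    set K : ℕ → ℕ := fun n => ⌈((n : ℝ) * T') / h₀⌉₊ with hK_def
    set B : ℕ → ℝ :=
      fun n => (Finset.range (K n + 1)).sup' ⟨0, Finset.mem_range.2 (Nat.succ_pos _)⟩ a
      with hB_def
    have hB0 : ∀ n, 0 ≤ B n := fun n =>
      (ha0 0).trans (Finset.le_sup' a (Finset.mem_range.2 (Nat.succ_pos _)))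
    -- key facts about the lap number
    have key : ∀ τ : ℝ, 0 ≤ τ →
        (((N τ y u : ℕ) : ℝ) * h₀ ≤ τ) ∧
        (0 ≤ u + τ - S (N τ y u)) ∧
        (u + τ - S (N τ y u) ≤ 2 * H y + a (N τ y u)) := by
      intro τ hτ
      rw [hN]
      set P : Set ℕ := {n : ℕ | u + S n ≤ τ} with hP_def
      by_cases h0 : (0 : ℕ) ∈ P
      · have hbdd : BddAbove P := by
          refine ⟨⌈τ / h₀⌉₊, fun n hn => ?_⟩
          have hn' : u + S n ≤ τ := hn
          have h1 : (n : ℝ) * h₀ ≤ τ := by have := hSlb n; linarith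
          have h2 : (n : ℝ) ≤ τ / h₀ := (le_div_iff₀ hh₀).2 h1
          have h3 : (n : ℝ) ≤ (⌈τ / h₀⌉₊ : ℝ) := h2.trans (Nat.le_ceil _)
          exact_mod_cast h3
        have hmem : sSup P ∈ P := Nat.sSup_mem ⟨0, h0⟩ hbdd
        have hnot : (sSup P + 1) ∉ P := by
          intro hmem'
          have := le_csSup hbdd hmem'
          omega
        have hmem' : u + S (sSup P) ≤ τ := hmem
        have hnot' : τ < u + (S (sSup P) + a (sSup P)) := by
          have h := lt_of_not_ge (fun h => hnot (h : u + S (sSup P + 1) ≤ τ))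
          rwa [hSsucc] at h
        refine ⟨?_, by linarith, by linarith⟩
        have := hSlb (sSup P)
        linarith
      · have h2 : ¬ (u + S 0 ≤ τ) := h0
        rw [hS0] at h2
        push_neg at h2
        have hPempty : P = ∅ := by
          ext n
          simp only [Set.mem_empty_iff_false, iff_false]
          intro hn
          have hn' : u + S n ≤ τ := hn
          have hpos : (0 : ℝ) ≤ S n := le_trans (by positivity) (hSlb n)
          linarith
        rw [hPempty]
        have hsup0 : sSup (∅ : Set ℕ) = 0 := csSup_empty
        rw [hsup0, hS0]
        have := ha0 0
        refine ⟨by simpa using hτ, by linarith, by linarith⟩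
    -- bound each term
    have bound : ∀ (n : ℕ) (t : Set.Icc (0:ℝ) T'),
        ‖ψ (F^[N ((n : ℝ) * (t : ℝ)) y u] y)
            ((u + (n : ℝ) * (t : ℝ)) -
              ∑ j ∈ Finset.range (N ((n : ℝ) * (t : ℝ)) y u), H (F^[j] y))‖
          ≤ vB * (2 * H y + B n) := by
      intro n t
      set τ : ℝ := (n : ℝ) * (t : ℝ) with hτ_def
      have hτ0 : 0 ≤ τ := mul_nonneg (Nat.cast_nonneg n) t.2.1
      obtain ⟨k1, k2, k3⟩ := key τ hτ0
      set N₀ : ℕ := N τ y u with hN₀_def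
      have hmemN : N₀ ∈ Finset.range (K n + 1) := by
        have h2 : (N₀ : ℝ) ≤ τ / h₀ := (le_div_iff₀ hh₀).2 k1
        have h3 : τ / h₀ ≤ ((n : ℝ) * T') / h₀ := by
          gcongr
          exact mul_le_mul_of_nonneg_left t.2.2 (Nat.cast_nonneg n)
        have h4 : (N₀ : ℝ) ≤ (K n : ℝ) := (h2.trans h3).trans (Nat.le_ceil _)
        have h5 : N₀ ≤ K n := by exact_mod_cast h4
        exact Finset.mem_range.2 (Nat.lt_succ_iff.2 h5)
      have haB : a N₀ ≤ B n := Finset.le_sup' a hmemN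
      set u' : ℝ := (u + τ) - S N₀ with hu'_def
      have hnorm : ‖ψ (F^[N₀] y) u'‖ ≤ vB * |u' - 0| := by
        rw [hψ]
        exact intervalIntegral.norm_integral_le_of_norm_le_const fun s _ =>
          hvB (T s (incl (F^[N₀] y)))
      have hu'0 : 0 ≤ u' := by
        have h := k2
        rw [hu'_def]
        linarith [h]
      have hu'le : u' ≤ 2 * H y + a N₀ := by
        have h := k3
        rw [hu'_def]
        linarith [h]
      calc ‖ψ (F^[N₀] y) u'‖ ≤ vB * |u' - 0| := hnorm
        _ = vB * u' := by rw [sub_zero, abs_of_nonneg hu'0]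
        _ ≤ vB * (2 * H y + a N₀) := mul_le_mul_of_nonneg_left hu'le hvB0
        _ ≤ vB * (2 * H y + B n) := by
            apply mul_le_mul_of_nonneg_left _ hvB0
            linarith
    -- assemble
    have hHy0 : 0 ≤ H y := hh₀.le.trans (hinf y)
    have hKle : ∀ n : ℕ, (K n : ℝ) ≤ (T' / h₀) * n + 1 := by
      intro n
      have hx : 0 ≤ ((n : ℝ) * T') / h₀ := by positivity
      have := (Nat.ceil_lt_add_one hx).le
      calc (K n : ℝ) ≤ ((n : ℝ) * T') / h₀ + 1 := this
        _ = (T' / h₀) * n + 1 := by ring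
    have hBtend : Tendsto (fun n : ℕ => (Real.sqrt n)⁻¹ * B n) atTop (nhds 0) :=
      stmt18_sup a ha0 hy (T' / h₀) (by positivity) K hKle
    have hrw : ∀ n : ℕ, ((n : ℝ) ^ (-(1/2 : ℝ))) = (Real.sqrt n)⁻¹ := by
      intro n
      rw [Real.sqrt_eq_rpow, ← Real.rpow_neg (Nat.cast_nonneg n)]
    have hsup_nn : ∀ n : ℕ, 0 ≤ ⨆ t : Set.Icc (0:ℝ) T',
        ‖ψ (F^[N ((n : ℝ) * (t : ℝ)) y u] y)
            ((u + (n : ℝ) * (t : ℝ)) -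
              ∑ j ∈ Finset.range (N ((n : ℝ) * (t : ℝ)) y u), H (F^[j] y))‖ := fun n =>
      Real.iSup_nonneg fun t => norm_nonneg _
    haveI : Nonempty (Set.Icc (0:ℝ) T') := ⟨⟨0, le_refl 0, hT'.le⟩⟩
    have hsup_le : ∀ n : ℕ, (⨆ t : Set.Icc (0:ℝ) T',
        ‖ψ (F^[N ((n : ℝ) * (t : ℝ)) y u] y)
            ((u + (n : ℝ) * (t : ℝ)) -
              ∑ j ∈ Finset.range (N ((n : ℝ) * (t : ℝ)) y u), H (F^[j] y))‖)
          ≤ vB * (2 * H y + B n) := fun n =>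
      ciSup_le (bound n)
    have hg_tend : Tendsto (fun n : ℕ => (Real.sqrt n)⁻¹ * (vB * (2 * H y + B n)))
        atTop (nhds 0) := by
      have h1 : Tendsto (fun n : ℕ => (Real.sqrt n)⁻¹ * (vB * (2 * H y)))
          atTop (nhds 0) := by
        simpa using stmt18_inv_sqrt.mul_const (vB * (2 * H y))
      have h2 : Tendsto (fun n : ℕ => vB * ((Real.sqrt n)⁻¹ * B n)) atTop (nhds 0) := by
        simpa using hBtend.const_mul vB
      have h3 := h1.add h2
      rw [add_zero] at h3
      exact h3.congr fun n => by ring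
    apply squeeze_zero (g := fun n : ℕ => (Real.sqrt n)⁻¹ * (vB * (2 * H y + B n)))
    · intro n
      exact mul_nonneg (Real.rpow_nonneg (Nat.cast_nonneg n) _) (hsup_nn n)
    · intro n
      rw [hrw n]
      exact mul_le_mul_of_nonneg_left (hsup_le n) (by positivity)
    · exact hg_tend
end
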